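/- Let I be an index set with |I| < 𝔠, and for each j ∈ I let (𝔅_j, 𝔅̃_j) be a pair of Boolean subalgebras of 𝒫(ω) and 𝒫(ω̃) containing finite sets, each of cardinality at most |I|, and let (M_j, M'_j) be a pair of sets of finitely additive measures of variation at most 1 on ω ⊔ ω̃ which is not (𝔅_j, 𝔅̃_j)-separated. Then for every almost disjoint family 𝒵 ⊆ 𝒫(ω) with |𝒵| = 𝔠 there exists Z ∈ 𝒵 such that for every j ∈ I the pair (M_j, M'_j) is not (𝔅_j[Z], 𝔅̃_j)-separated. -/

import Mathlib

/-- A finitely additive real measure of total variation at most `1` on the disjoint union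
`ℕ ⊕ ℕ` (of `ω` and `ω̃`), modelled as a set function. -/
def IsFAM1 (l : Set (ℕ ⊕ ℕ) → ℝ) : Prop :=
  (∀ A B : Set (ℕ ⊕ ℕ), Disjoint A B → l (A ∪ B) = l A + l B) ∧
  ∀ (n : ℕ) (P : Fin n → Set (ℕ ⊕ ℕ)), Pairwise (Function.onFun Disjoint P) →
    ∑ i, |l (P i)| ≤ 1

/-- `(M, M')` is `(𝔅, 𝔅̃)`-separated: there are `ε > 0` and finitely many sets
`B₁, …, B_n ∈ 𝔅`, `B̃₁, …, B̃_m ∈ 𝔅̃` such that every `λ ∈ M`, `λ' ∈ M'` differ by at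
least `ε` on one of these sets. -/
def Separated (𝔅 𝔅t : Set (Set ℕ)) (M M' : Set (Set (ℕ ⊕ ℕ) → ℝ)) : Prop :=
  ∃ ε > (0 : ℝ), ∃ (n m : ℕ) (B : Fin n → Set ℕ) (Bt : Fin m → Set ℕ),
    (∀ i, B i ∈ 𝔅) ∧ (∀ j, Bt j ∈ 𝔅t) ∧
    ∀ l ∈ M, ∀ l' ∈ M',
      (∃ i, ε ≤ |l (Sum.inl '' B i) - l' (Sum.inl '' B i)|) ∨
      (∃ j, ε ≤ |l (Sum.inr '' Bt j) - l' (Sum.inr '' Bt j)|)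

/-- `𝔄` is a Boolean subalgebra of `𝒫(ℕ)`. -/
def IsAlg (𝔄 : Set (Set ℕ)) : Prop :=
  ∅ ∈ 𝔄 ∧ (∀ A ∈ 𝔄, Aᶜ ∈ 𝔄) ∧ ∀ A ∈ 𝔄, ∀ B ∈ 𝔄, A ∪ B ∈ 𝔄

/-- The Boolean subalgebra of `𝒫(ℕ)` generated by a family `F`. -/
def genAlg (F : Set (Set ℕ)) : Set (Set ℕ) :=
  ⋂₀ {S | F ⊆ S ∧ ∅ ∈ S ∧ (∀ A ∈ S, Aᶜ ∈ S) ∧ ∀ A ∈ S, ∀ B ∈ S, A ∪ B ∈ S}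

lemma genAlg_rep {𝔄 : Set (Set ℕ)} (h : IsAlg 𝔄) (Z : Set ℕ) :
    genAlg (𝔄 ∪ {Z}) ⊆ {S | ∃ B ∈ 𝔄, ∃ B' ∈ 𝔄, S = (B ∩ Z) ∪ (B' ∩ Zᶜ)} := by
  obtain ⟨hemp, hcompl, hunion⟩ := h
  intro S hS
  apply hS
  refine ⟨?_, ?_, ?_, ?_⟩
  · rintro A (hA | rfl)
    · exact ⟨A, hA, A, hA, by rw [Set.inter_union_compl]⟩
    · exact ⟨∅ᶜ, hcompl ∅ hemp, ∅, hemp, by simp⟩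
  · exact ⟨∅, hemp, ∅, hemp, by simp⟩
  · rintro A ⟨B, hB, B', hB', rfl⟩
    refine ⟨Bᶜ, hcompl _ hB, B'ᶜ, hcompl _ hB', ?_⟩
    rw [Set.compl_union]
    ext x
    by_cases hx : x ∈ Z <;> simp [hx]
  · rintro A ⟨B, hB, B', hB', rfl⟩ A' ⟨C, hC, C', hC', rfl⟩
    refine ⟨B ∪ C, hunion _ hB _ hC, B' ∪ C', hunion _ hB' _ hC', ?_⟩
    ext x
    by_cases hx : x ∈ Z <;> simp [hx] <;> tauto

lemma notsep_elim {𝔄 𝔄t : Set (Set ℕ)} {M M' : Set (Set (ℕ ⊕ ℕ) → ℝ)}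
    (h : ¬ Separated 𝔄 𝔄t M M') {δ : ℝ} (hδ : 0 < δ)
    {𝒞 𝒞t : Set (Set ℕ)} (hC : 𝒞.Finite) (hCA : 𝒞 ⊆ 𝔄)
    (hCt : 𝒞t.Finite) (hCtA : 𝒞t ⊆ 𝔄t) :
    ∃ l ∈ M, ∃ l' ∈ M',
      (∀ A ∈ 𝒞, |l (Sum.inl '' A) - l' (Sum.inl '' A)| < δ) ∧
      (∀ A ∈ 𝒞t, |l (Sum.inr '' A) - l' (Sum.inr '' A)| < δ) := by
  unfold Separated at h
  push_neg at h
  classical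
  set n := hC.toFinset.card with hn
  set m := hCt.toFinset.card with hm
  set B : Fin n → Set ℕ := fun i => (hC.toFinset.equivFin.symm i : Set ℕ) with hB
  set Bt : Fin m → Set ℕ := fun i => (hCt.toFinset.equivFin.symm i : Set ℕ) with hBt
  have hBmem : ∀ i, B i ∈ 𝔄 := fun i =>
    hCA (hC.mem_toFinset.mp (hC.toFinset.equivFin.symm i).2)
  have hBtmem : ∀ i, Bt i ∈ 𝔄t := fun i =>
    hCtA (hCt.mem_toFinset.mp (hCt.toFinset.equivFin.symm i).2)
  obtain ⟨l, hl, l', hl', h1, h2⟩ := h δ hδ n m B Bt hBmem hBtmem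
  refine ⟨l, hl, l', hl', ?_, ?_⟩
  · intro A hA
    have hAmem : A ∈ hC.toFinset := hC.mem_toFinset.mpr hA
    have := h1 (hC.toFinset.equivFin ⟨A, hAmem⟩)
    simpa [hB] using this
  · intro A hA
    have hAmem : A ∈ hCt.toFinset := hCt.mem_toFinset.mpr hA
    have := h2 (hCt.toFinset.equivFin ⟨A, hAmem⟩)
    simpa [hBt] using this

lemma nu_add {l l' : Set (ℕ ⊕ ℕ) → ℝ} (hl : IsFAM1 l) (hl' : IsFAM1 l')
    {A B : Set ℕ} (h : Disjoint A B) :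
    l (Sum.inl '' (A ∪ B)) - l' (Sum.inl '' (A ∪ B)) =
      (l (Sum.inl '' A) - l' (Sum.inl '' A)) + (l (Sum.inl '' B) - l' (Sum.inl '' B)) := by
  have hd : Disjoint (Sum.inl '' A : Set (ℕ ⊕ ℕ)) (Sum.inl '' B) :=
    (Set.disjoint_image_iff Sum.inl_injective).mpr h
  rw [Set.image_union, hl.1 _ _ hd, hl'.1 _ _ hd]
  ring

lemma nu_var {l l' : Set (ℕ ⊕ ℕ) → ℝ} (hl : IsFAM1 l) (hl' : IsFAM1 l')
    {K : ℕ} (P : Fin K → Set ℕ) (hP : Pairwise (Function.onFun Disjoint P)) :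
    ∑ i, |l (Sum.inl '' P i) - l' (Sum.inl '' P i)| ≤ 2 := by
  have hP' : Pairwise (Function.onFun Disjoint fun i => (Sum.inl '' P i : Set (ℕ ⊕ ℕ))) := by
    intro a b hab
    exact (Set.disjoint_image_iff Sum.inl_injective).mpr (hP hab)
  have h1 := hl.2 K (fun i => Sum.inl '' P i) hP'
  have h2 := hl'.2 K (fun i => Sum.inl '' P i) hP'
  calc ∑ i, |l (Sum.inl '' P i) - l' (Sum.inl '' P i)|
      ≤ ∑ i, (|l (Sum.inl '' P i)| + |l' (Sum.inl '' P i)|) :=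
        Finset.sum_le_sum fun i _ => abs_sub _ _
    _ = (∑ i, |l (Sum.inl '' P i)|) + ∑ i, |l' (Sum.inl '' P i)| := Finset.sum_add_distrib
    _ ≤ 2 := by linarith

def nuF (l l' : Set (ℕ ⊕ ℕ) → ℝ) (A : Set ℕ) : ℝ :=
  l (Sum.inl '' A) - l' (Sum.inl '' A)

lemma core {𝔄 𝔄t : Set (Set ℕ)} {M M' : Set (Set (ℕ ⊕ ℕ) → ℝ)}
    (hfinset : ∀ F : Set ℕ, F.Finite → F ∈ 𝔄)
    (hfa : ∀ l ∈ M ∪ M', IsFAM1 l)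
    (hns : ¬ Separated 𝔄 𝔄t M M')
    {ε : ℝ} (hε : 0 < ε) {n m : ℕ}
    (B B' : Fin n → Set ℕ) (hB : ∀ i, B i ∈ 𝔄) (hB' : ∀ i, B' i ∈ 𝔄)
    (Bt : Fin m → Set ℕ) (hBt : ∀ k, Bt k ∈ 𝔄t)
    {N K : ℕ} (hK : 16 < (K : ℝ) * ε) (hN : n * 2 * K < N)
    (Z : Fin N → Set ℕ)
    (hZad : ∀ a b : Fin N, a ≠ b → (Z a ∩ Z b).Finite)
    (hsep : ∀ a : Fin N, ∀ l ∈ M, ∀ l' ∈ M',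
      (∃ i, ε ≤ |l (Sum.inl '' ((B i ∩ Z a) ∪ (B' i ∩ (Z a)ᶜ))) -
               l' (Sum.inl '' ((B i ∩ Z a) ∪ (B' i ∩ (Z a)ᶜ)))|) ∨
      (∃ k, ε ≤ |l (Sum.inr '' Bt k) - l' (Sum.inr '' Bt k)|)) : False := by
  classical
  -- the finite "garbage" set
  set F : Set ℕ :=
    ⋃ p ∈ (((Finset.univ : Finset (Fin N)).offDiag : Finset (Fin N × Fin N)) :
      Set (Fin N × Fin N)), Z p.1 ∩ Z p.2 with hFdef
  have hF : F.Finite := by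
    apply Set.Finite.biUnion (Finset.finite_toSet _)
    intro p hp
    simp only [Finset.coe_offDiag, Set.mem_setOf_eq] at hp
    exact hZad p.1 p.2 hp.2.2
  -- the collection of sets where the measures should be close
  set 𝒞 : Set (Set ℕ) := (Set.range B ∪ Set.range B') ∪ {S | S ⊆ F} with hCdef
  have hCfin : 𝒞.Finite :=
    ((Set.finite_range B).union (Set.finite_range B')).union hF.finite_subsets
  have hCA : 𝒞 ⊆ 𝔄 := by
    rintro A ((⟨i, rfl⟩ | ⟨i, rfl⟩) | hA)
    · exact hB i
    · exact hB' i
    · exact hfinset A (hF.subset hA)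
  obtain ⟨l, hlM, l', hl'M, hsmall, hsmallt⟩ :=
    notsep_elim hns (show (0:ℝ) < ε/4 by linarith) hCfin hCA (Set.finite_range Bt)
      (by rintro A ⟨k, rfl⟩; exact hBt k)
  have hl : IsFAM1 l := hfa l (Or.inl hlM)
  have hl' : IsFAM1 l' := hfa l' (Or.inr hl'M)
  have hadd : ∀ {A A' : Set ℕ}, Disjoint A A' →
      nuF l l' (A ∪ A') = nuF l l' A + nuF l l' A' := fun h => nu_add hl hl' h
  -- for each a, one of B i ∩ Z a, B' i ∩ Z a carries mass ≥ 3ε/8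
  have key : ∀ a : Fin N, ∃ p : Fin n × Bool,
      3*ε/8 ≤ |nuF l l' ((bif p.2 then B p.1 else B' p.1) ∩ Z a)| := by
    intro a
    rcases hsep a l hlM l' hl'M with ⟨i, hi⟩ | ⟨k, hk⟩
    · have e1 : nuF l l' ((B i ∩ Z a) ∪ (B' i ∩ (Z a)ᶜ)) =
          nuF l l' (B i ∩ Z a) + nuF l l' (B' i ∩ (Z a)ᶜ) :=
        hadd (Disjoint.mono Set.inter_subset_right Set.inter_subset_right
          disjoint_compl_right)
      have e2 : nuF l l' (B' i) = nuF l l' (B' i ∩ Z a) + nuF l l' (B' i ∩ (Z a)ᶜ) := by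
        conv_lhs => rw [← Set.inter_union_compl (B' i) (Z a)]
        exact hadd (Disjoint.mono Set.inter_subset_right Set.inter_subset_right
          disjoint_compl_right)
      have hB'small : |nuF l l' (B' i)| < ε/4 :=
        hsmall _ (Or.inl (Or.inr ⟨i, rfl⟩))
      have hi' : ε ≤ |nuF l l' ((B i ∩ Z a) ∪ (B' i ∩ (Z a)ᶜ))| := hi
      have hbound : ε ≤ |nuF l l' (B i ∩ Z a)| + |nuF l l' (B' i ∩ Z a)| +
          |nuF l l' (B' i)| := by
        have : nuF l l' ((B i ∩ Z a) ∪ (B' i ∩ (Z a)ᶜ)) =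
            nuF l l' (B i ∩ Z a) - nuF l l' (B' i ∩ Z a) + nuF l l' (B' i) := by
          rw [e1, e2]; ring
        rw [this] at hi'
        calc ε ≤ |nuF l l' (B i ∩ Z a) - nuF l l' (B' i ∩ Z a) + nuF l l' (B' i)| := hi'
          _ ≤ |nuF l l' (B i ∩ Z a) - nuF l l' (B' i ∩ Z a)| + |nuF l l' (B' i)| :=
              abs_add_le _ _
          _ ≤ |nuF l l' (B i ∩ Z a)| + |nuF l l' (B' i ∩ Z a)| + |nuF l l' (B' i)| := by
              have := abs_sub (nuF l l' (B i ∩ Z a)) (nuF l l' (B' i ∩ Z a))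
              linarith
      by_cases hc : 3*ε/8 ≤ |nuF l l' (B i ∩ Z a)|
      · exact ⟨(i, true), hc⟩
      · exact ⟨(i, false), by push_neg at hc; simp only [Bool.cond_false]; linarith⟩
    · have : |l (Sum.inr '' Bt k) - l' (Sum.inr '' Bt k)| < ε/4 :=
        hsmallt _ ⟨k, rfl⟩
      linarith
  choose φ hφ using key
  -- pigeonhole
  have hcard : Fintype.card (Fin n × Bool) * K < Fintype.card (Fin N) := by
    simpa [Fintype.card_prod] using hN
  obtain ⟨y, hy⟩ := Fintype.exists_lt_card_fiber_of_mul_lt_card φ hcard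
  set T : Finset (Fin N) := Finset.filter (fun x => φ x = y) Finset.univ with hTdef
  set C : Set ℕ := bif y.2 then B y.1 else B' y.1 with hCydef
  have hT : ∀ a ∈ T, 3*ε/8 ≤ |nuF l l' (C ∩ Z a)| := by
    intro a ha
    have hay : φ a = y := (Finset.mem_filter.mp ha).2
    have h2 := hφ a
    rw [hay] at h2
    simpa [hCydef] using h2
  -- disjointified pieces
  set U : Fin N → Set ℕ := fun a => ⋃ b ∈ ((T.filter (fun b => b < a) : Finset (Fin N)) :
      Set (Fin N)), Z b with hUdef
  set G : Fin N → Set ℕ := fun a => (C ∩ Z a) \ U a with hGdef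
  set D : Fin N → Set ℕ := fun a => (C ∩ Z a) ∩ U a with hDdef
  have hsplit : ∀ a, nuF l l' (C ∩ Z a) = nuF l l' (G a) + nuF l l' (D a) := by
    intro a
    conv_lhs => rw [← Set.diff_union_inter (C ∩ Z a) (U a)]
    exact hadd (Set.disjoint_sdiff_left.mono_right Set.inter_subset_right)
  have hDF : ∀ a, D a ⊆ F := by
    intro a x hx
    obtain ⟨⟨_, hxa⟩, hxU⟩ := hx
    simp only [hUdef, Set.mem_iUnion, Finset.coe_filter, Set.mem_setOf_eq,
      exists_prop] at hxU
    obtain ⟨b, ⟨hbT, hba⟩, hxb⟩ := hxU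
    apply Set.mem_biUnion (show ((a, b) : Fin N × Fin N) ∈
      ((((Finset.univ : Finset (Fin N)).offDiag : Finset (Fin N × Fin N)) :
      Set (Fin N × Fin N))) from ?_)
    · exact ⟨hxa, hxb⟩
    · simp only [Finset.coe_offDiag, Set.mem_setOf_eq]
      exact ⟨Finset.mem_univ _, Finset.mem_univ _, (ne_of_lt hba).symm⟩
  have hGbig : ∀ a ∈ T, ε/8 ≤ |nuF l l' (G a)| := by
    intro a ha
    have h1 := hT a ha
    have h2 : |nuF l l' (D a)| < ε/4 := hsmall _ (Or.inr (hDF a))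
    have h3 := hsplit a
    have : |nuF l l' (C ∩ Z a)| ≤ |nuF l l' (G a)| + |nuF l l' (D a)| := by
      rw [h3]; exact abs_add_le _ _
    linarith
  -- the G a, a ∈ T, are pairwise disjoint
  have hGdisj : ∀ a ∈ T, ∀ b ∈ T, a ≠ b → Disjoint (G a) (G b) := by
    have main : ∀ a ∈ T, ∀ b ∈ T, a < b → Disjoint (G a) (G b) := by
      intro a ha b _ hab
      rw [Set.disjoint_left]
      intro x hxa hxb
      have hxZa : x ∈ Z a := hxa.1.2
      have : x ∈ U b := by
        simp only [hUdef, Set.mem_iUnion, Finset.coe_filter, Set.mem_setOf_eq,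
          exists_prop]
        exact ⟨a, ⟨ha, hab⟩, hxZa⟩
      exact hxb.2 this
    intro a ha b hb hab
    rcases lt_or_gt_of_ne hab with h | h
    · exact main a ha b hb h
    · exact (main b hb a ha h).symm
  -- sum up
  set P : Fin T.card → Set ℕ := fun t => G (T.equivFin.symm t).1 with hPdef
  have hPdisj : Pairwise (Function.onFun Disjoint P) := by
    intro s t hst
    have hne : ((T.equivFin.symm s).1 : Fin N) ≠ (T.equivFin.symm t).1 := by
      intro h
      exact hst (T.equivFin.symm.injective (Subtype.ext h))
    exact hGdisj _ (T.equivFin.symm s).2 _ (T.equivFin.symm t).2 hne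
  have hvar : ∑ t, |nuF l l' (P t)| ≤ 2 := nu_var hl hl' P hPdisj
  have hlow : (T.card : ℝ) * (ε/8) ≤ ∑ t, |nuF l l' (P t)| := by
    have := Finset.card_nsmul_le_sum (Finset.univ : Finset (Fin T.card))
      (fun t => |nuF l l' (P t)|) (ε/8) (fun t _ => hGbig _ (T.equivFin.symm t).2)
    simpa [nsmul_eq_mul] using this
  have hKc : (K : ℝ) < T.card := by exact_mod_cast hy
  nlinarith [hε, hK, hKc, hvar, hlow]

lemma mk_prod_le {α β : Type} {κ : Cardinal} (hκ : Cardinal.aleph0 ≤ κ)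
    (ha : Cardinal.mk α ≤ κ) (hb : Cardinal.mk β ≤ κ) : Cardinal.mk (α × β) ≤ κ := by
  rw [Cardinal.mk_prod]
  simp only [Cardinal.lift_id]
  calc Cardinal.mk α * Cardinal.mk β ≤ Cardinal.mk α ⊔ Cardinal.mk β ⊔ Cardinal.aleph0 :=
        Cardinal.mul_le_max _ _
    _ ≤ κ := sup_le (sup_le ha hb) hκ

lemma mk_fun_le {X : Type} {κ : Cardinal} (hκ : Cardinal.aleph0 ≤ κ)
    (h : Cardinal.mk X ≤ κ) (n : ℕ) : Cardinal.mk (Fin n → X) ≤ κ := by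
  rw [Cardinal.mk_arrow]
  simp only [Cardinal.mk_fin, Cardinal.lift_natCast, Cardinal.lift_id]
  calc Cardinal.mk X ^ (n : Cardinal) ≤ κ ^ (n : Cardinal) :=
        Cardinal.power_le_power_right h
    _ = κ ^ n := by rw [Cardinal.power_natCast]
    _ ≤ κ := Cardinal.power_nat_le hκ

lemma mk_sigma_le' {ι : Type} {f : ι → Type} {κ : Cardinal} (hκ : Cardinal.aleph0 ≤ κ)
    (hι : Cardinal.mk ι ≤ κ) (h : ∀ i, Cardinal.mk (f i) ≤ κ) :
    Cardinal.mk (Σ i, f i) ≤ κ := by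
  rw [Cardinal.mk_sigma]
  calc Cardinal.sum (fun i => Cardinal.mk (f i)) ≤ Cardinal.sum (fun _ : ι => κ) :=
        Cardinal.sum_le_sum _ _ h
    _ = Cardinal.mk ι * κ := Cardinal.sum_const' ι κ
    _ ≤ Cardinal.mk ι ⊔ κ ⊔ Cardinal.aleph0 := Cardinal.mul_le_max _ _
    _ ≤ κ := sup_le (sup_le hι le_rfl) hκ

/-- The type of possible separation data. -/
def DtT {I : Type} (𝔅 𝔅t : I → Set (Set ℕ)) : Type :=
  Σ j : I, ℚ × Σ n : ℕ, Σ m : ℕ,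
    (Fin n → ↥(𝔅 j)) × (Fin n → ↥(𝔅 j)) × (Fin m → ↥(𝔅t j))

/-- `d` is valid separation data for `Z`. -/
def PrD {I : Type} (𝔅 𝔅t : I → Set (Set ℕ)) (M M' : I → Set (Set (ℕ ⊕ ℕ) → ℝ))
    (Z : Set ℕ) (d : DtT 𝔅 𝔅t) : Prop :=
  0 < d.2.1 ∧
  ∀ l ∈ M d.1, ∀ l' ∈ M' d.1,
    (∃ i, ((d.2.1 : ℝ)) ≤
      |l (Sum.inl '' ((↑(d.2.2.2.2.1 i) ∩ Z) ∪ (↑(d.2.2.2.2.2.1 i) ∩ Zᶜ))) -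
       l' (Sum.inl '' ((↑(d.2.2.2.2.1 i) ∩ Z) ∪ (↑(d.2.2.2.2.2.1 i) ∩ Zᶜ)))|) ∨
    (∃ k, ((d.2.1 : ℝ)) ≤
      |l (Sum.inr '' (↑(d.2.2.2.2.2.2 k) : Set ℕ)) -
       l' (Sum.inr '' (↑(d.2.2.2.2.2.2 k) : Set ℕ))|)

lemma mk_DtT_lt {I : Type} (𝔅 𝔅t : I → Set (Set ℕ))
    (hI : Cardinal.mk I < Cardinal.continuum)
    (hcard : ∀ j, Cardinal.mk (𝔅 j) ≤ Cardinal.mk I ∧ Cardinal.mk (𝔅t j) ≤ Cardinal.mk I) :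
    Cardinal.mk (DtT 𝔅 𝔅t) < Cardinal.continuum := by
  set κ := Cardinal.aleph0 ⊔ Cardinal.mk I with hκdef
  have hκ : Cardinal.aleph0 ≤ κ := le_sup_left
  have hκc : κ < Cardinal.continuum := sup_lt_iff.mpr ⟨Cardinal.aleph0_lt_continuum, hI⟩
  refine lt_of_le_of_lt ?_ hκc
  apply mk_sigma_le' hκ le_sup_right
  intro j
  apply mk_prod_le hκ (le_trans (le_of_eq (Cardinal.mk_denumerable ℚ)) hκ)
  apply mk_sigma_le' hκ (le_trans (le_of_eq (Cardinal.mk_denumerable ℕ)) hκ)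
  intro n
  apply mk_sigma_le' hκ (le_trans (le_of_eq (Cardinal.mk_denumerable ℕ)) hκ)
  intro m
  have hX : Cardinal.mk ↥(𝔅 j) ≤ κ := le_trans (hcard j).1 le_sup_right
  have hY : Cardinal.mk ↥(𝔅t j) ≤ κ := le_trans (hcard j).2 le_sup_right
  exact mk_prod_le hκ (mk_fun_le hκ hX n)
    (mk_prod_le hκ (mk_fun_le hκ hX n) (mk_fun_le hκ hY m))

/-- Haydon's counting argument: given fewer than continuum many pairs of algebras
`(𝔅_j, 𝔅̃_j)` (containing finite sets, of cardinality at most `|I|`) and non-separated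
pairs `(M_j, M'_j)` of sets of measures, every almost disjoint family `𝒵` of size continuum
contains a `Z` such that no pair `(M_j, M'_j)` becomes `(𝔅_j[Z], 𝔅̃_j)`-separated. -/
theorem stmt_12 {I : Type} (hI : Cardinal.mk I < Cardinal.continuum)
    (𝔅 𝔅t : I → Set (Set ℕ))
    (halg : ∀ j, IsAlg (𝔅 j) ∧ IsAlg (𝔅t j))
    (hfin : ∀ j, (∀ F : Set ℕ, F.Finite → F ∈ 𝔅 j) ∧ ∀ F : Set ℕ, F.Finite → F ∈ 𝔅t j)
    (hcard : ∀ j, Cardinal.mk (𝔅 j) ≤ Cardinal.mk I ∧ Cardinal.mk (𝔅t j) ≤ Cardinal.mk I)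
    (M M' : I → Set (Set (ℕ ⊕ ℕ) → ℝ))
    (hfa : ∀ j, ∀ l ∈ M j ∪ M' j, IsFAM1 l)
    (hnotsep : ∀ j, ¬ Separated (𝔅 j) (𝔅t j) (M j) (M' j))
    (𝒵 : Set (Set ℕ)) (h𝒵inf : ∀ Z ∈ 𝒵, Z.Infinite)
    (h𝒵ad : 𝒵.Pairwise fun A B => (A ∩ B).Finite)
    (h𝒵card : Cardinal.mk 𝒵 = Cardinal.continuum) :
    ∃ Z ∈ 𝒵, ∀ j : I, ¬ Separated (genAlg (𝔅 j ∪ {Z})) (𝔅t j) (M j) (M' j) := by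
  classical
  have h𝒵ne : 𝒵.Nonempty := by
    rw [Set.nonempty_iff_ne_empty]
    rintro rfl
    rw [Cardinal.mk_emptyCollection] at h𝒵card
    exact Cardinal.continuum_ne_zero h𝒵card.symm
  obtain hI0 | hne := isEmpty_or_nonempty I
  · obtain ⟨Z, hZ⟩ := h𝒵ne
    exact ⟨Z, hZ, fun j => (hI0.false j).elim⟩
  by_contra hcon
  push_neg at hcon
  -- hcon : ∀ Z ∈ 𝒵, ∃ j, Separated (genAlg (𝔅 j ∪ {Z})) (𝔅t j) (M j) (M' j)
  have hex : ∀ Z : ↥𝒵, ∃ d : DtT 𝔅 𝔅t, PrD 𝔅 𝔅t M M' ↑Z d := by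
    rintro ⟨Z, hZ⟩
    obtain ⟨j, ε, hε, nn, mm, S, Bts, hS, hBts, hmain⟩ := hcon Z hZ
    have hrep : ∀ i, ∃ b : ↥(𝔅 j), ∃ b' : ↥(𝔅 j),
        S i = ((b : Set ℕ) ∩ Z) ∪ ((b' : Set ℕ) ∩ Zᶜ) := by
      intro i
      obtain ⟨b, hb, b', hb', h⟩ := genAlg_rep (halg j).1 Z (hS i)
      exact ⟨⟨b, hb⟩, ⟨b', hb'⟩, h⟩
    choose Bf Bf' hBf using hrep
    obtain ⟨q, hq0, hqε⟩ := exists_rat_btwn hε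
    refine ⟨⟨j, q, nn, mm, Bf, Bf', fun k => ⟨Bts k, hBts k⟩⟩, ?_, ?_⟩
    · exact_mod_cast hq0
    · intro l hl l' hl'
      rcases hmain l hl l' hl' with ⟨i, hi⟩ | ⟨k, hk⟩
      · exact Or.inl ⟨i, by rw [← hBf i]; exact le_trans (le_of_lt hqε) hi⟩
      · exact Or.inr ⟨k, le_trans (le_of_lt hqε) hk⟩
  choose f hf using hex
  have hDt : Cardinal.mk (DtT 𝔅 𝔅t) < Cardinal.mk ↥𝒵 := by
    rw [h𝒵card]; exact mk_DtT_lt 𝔅 𝔅t hI hcard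
  have hDtinf : Infinite (DtT 𝔅 𝔅t) := by
    obtain ⟨j₀⟩ := hne
    refine Infinite.of_injective
      (fun q : ℚ => (⟨j₀, q, 0, 0, finZeroElim, finZeroElim, finZeroElim⟩ : DtT 𝔅 𝔅t))
      (fun q q' h => ?_)
    simpa using congrArg (fun d : DtT 𝔅 𝔅t => d.2.1) h
  obtain ⟨d, hdinf⟩ := Cardinal.exists_infinite_fiber' f hDt
  have hfibinf : (f ⁻¹' {d}).Infinite := Set.infinite_coe_iff.mp hdinf
  obtain ⟨j, q, nn, mm, Bf, Bf', Btf⟩ := d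
  set d : DtT 𝔅 𝔅t := ⟨j, q, nn, mm, Bf, Bf', Btf⟩ with hddef
  -- positivity of q
  obtain ⟨Z₀, hZ₀⟩ := hfibinf.nonempty
  have hq0 : (0 : ℚ) < q := by
    have h1 := hf Z₀
    rw [Set.mem_preimage, Set.mem_singleton_iff] at hZ₀
    rw [hZ₀] at h1
    exact h1.1
  have hqR : (0 : ℝ) < (q : ℝ) := by exact_mod_cast hq0
  -- choose parameters
  set K : ℕ := ⌈(16 : ℝ) / (q : ℝ)⌉₊ + 1 with hKdef
  have hK : 16 < (K : ℝ) * (q : ℝ) := by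
    have h1 : (16 : ℝ) / (q : ℝ) ≤ ⌈(16 : ℝ) / (q : ℝ)⌉₊ := Nat.le_ceil _
    have h2 : (16 : ℝ) / (q : ℝ) < K := by
      rw [hKdef]; push_cast; linarith
    calc (16 : ℝ) = (16 / (q : ℝ)) * q := by field_simp
      _ < (K : ℝ) * q := by exact mul_lt_mul_of_pos_right h2 hqR
  set N : ℕ := nn * 2 * K + 1 with hNdef
  have hN : nn * 2 * K < N := Nat.lt_succ_self _
  -- extract N distinct members of the fiber
  obtain ⟨t, hts, htc⟩ := hfibinf.exists_subset_card_eq N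
  set e : Fin N → ↥t := fun a => t.equivFin.symm (Fin.cast htc.symm a) with hedef
  have heinj : Function.Injective e := by
    intro a b h
    simp only [hedef] at h
    have h2 := t.equivFin.symm.injective h
    exact Fin.ext (by simpa using congrArg Fin.val h2)
  set ZZ : Fin N → Set ℕ := fun a => ((e a : ↥𝒵) : Set ℕ) with hZZdef
  have hZZmem : ∀ a, ZZ a ∈ 𝒵 := fun a => (e a : ↥𝒵).2
  have hZZinj : Function.Injective ZZ := by
    intro a b h
    apply heinj
    exact Subtype.ext (Subtype.ext h)
  have hZZfib : ∀ a, f ((e a : ↥t) : ↥𝒵) = d := by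
    intro a
    have := hts (e a).2
    rwa [Set.mem_preimage, Set.mem_singleton_iff] at this
  have hP : ∀ a, PrD 𝔅 𝔅t M M' (ZZ a) d := by
    intro a
    have h1 := hf ((e a : ↥t) : ↥𝒵)
    rwa [hZZfib a] at h1
  have hZad : ∀ a b : Fin N, a ≠ b → (ZZ a ∩ ZZ b).Finite := by
    intro a b hab
    exact h𝒵ad (hZZmem a) (hZZmem b) (fun h => hab (hZZinj h))
  exact core (hfin j).1 (hfa j) (hnotsep j) hqR
    (fun i => (Bf i : Set ℕ)) (fun i => (Bf' i : Set ℕ))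
    (fun i => (Bf i).2) (fun i => (Bf' i).2)
    (fun k => (Btf k : Set ℕ)) (fun k => (Btf k).2)
    hK hN ZZ hZad
    (fun a l hl l' hl' => (hP a).2 l hl l' hl')
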